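/- Let S be a real-linear endomorphism of E = V ⊕ V* with S² = λ·id (λ = ±1). Then S is skew-symmetric for b and anti-commutes with J_ℓ if and only if b_ℓ(Sx, Sy) = −λ · conj(b_ℓ(x, y)) for all x, y ∈ E. Moreover, in this case, if λ = 1 then S is split (its 1- and (−1)-eigenspaces have equal dimension), since J_ℓ interchanges the eigenspaces of S. -/

import Mathlib

/-- for `S` with `S² = λ·id`, `S` is skew-symmetric for `b` and
anti-commutes with `J_ℓ` iff `b_ℓ(Sx, Sy) = -λ conj (b_ℓ(x,y))`; moreover in
this case, if `λ = 1` then `S` is split (its `±1`-eigenspaces have equal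
dimension). -/
theorem stmt4 (V : Type*) [AddCommGroup V] [Module ℝ V] [FiniteDimensional ℝ V]
    (j : V →ₗ[ℝ] V) (hj : ∀ v, j (j v) = -v)
    (ℓ lam : ℝ) (hℓ : ℓ = 1 ∨ ℓ = -1) (hlam : lam = 1 ∨ lam = -1)
    (b : (V × Module.Dual ℝ V) → (V × Module.Dual ℝ V) → ℝ)
    (hb : ∀ x y, b x y = y.2 x.1 + x.2 y.1)
    (J : (V × Module.Dual ℝ V) → (V × Module.Dual ℝ V))
    (hJ : ∀ x, J x = (j x.1, ℓ • j.dualMap x.2))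
    (bl : (V × Module.Dual ℝ V) → (V × Module.Dual ℝ V) → ℂ)
    (hbl : ∀ x y, bl x y = (b x y : ℂ) - Complex.I * (b x (J y) : ℂ))
    (S : Module.End ℝ (V × Module.Dual ℝ V))
    (hS : ∀ x, S (S x) = lam • x) :
    (((∀ x y, b (S x) y = - b x (S y)) ∧ (∀ x, S (J x) = - J (S x))) ↔
      (∀ x y, bl (S x) (S y) = -(lam : ℂ) * (starRingEnd ℂ) (bl x y))) ∧
    ((∀ x y, b (S x) y = - b x (S y)) → (∀ x, S (J x) = - J (S x)) → lam = 1 →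
      Module.finrank ℝ (S.eigenspace 1) = Module.finrank ℝ (S.eigenspace (-1))) := by
  have hlam0 : lam ≠ 0 := by rcases hlam with h | h <;> simp [h]
  -- linearity of b in each variable (pointwise facts)
  have hb_neg : ∀ x z, b x (-z) = - b x z := by
    intro x z; simp [hb]; ring
  have hb_smul : ∀ (c : ℝ) x z, b x (c • z) = c * b x z := by
    intro c x z; simp [hb]; ring
  have hb_add : ∀ x z w, b x (z + w) = b x z + b x w := by
    intro x z w; simp [hb]; ring
  -- nondegeneracy of b
  have hnd : ∀ z : V × Module.Dual ℝ V, (∀ x, b x z = 0) → z = 0 := by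
    intro z hz
    have h2 : z.2 = 0 := by
      ext v
      simpa [hb] using hz (v, 0)
    have h1 : z.1 = 0 := by
      rw [← Module.forall_dual_apply_eq_zero_iff ℝ]
      intro τ
      simpa [hb] using hz (0, τ)
    exact Prod.ext h1 h2
  -- J ∘ J = -id
  have hJJ : ∀ x, J (J x) = -x := by
    intro x
    rw [hJ, hJ]
    have hl2 : ℓ * ℓ = 1 := by rcases hℓ with h | h <;> simp [h]
    refine Prod.ext (by simp [hj]) ?_
    ext v
    simp [smul_smul, hl2, hj]
  constructor
  · constructor
    · rintro ⟨hskew, hanti⟩ x y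
      have h1 : b (S x) (S y) = -(lam * b x y) := by
        rw [hskew, hS, hb_smul]
      have hJS : J (S y) = - S (J y) := by rw [hanti y, neg_neg]
      have h2 : b (S x) (J (S y)) = lam * b x (J y) := by
        rw [hJS, hb_neg, hskew, hS, hb_smul]
        ring
      rw [hbl, hbl, h1, h2]
      simp [map_sub, map_mul, Complex.conj_ofReal]
      ring
    · intro H
      -- extract real and imaginary parts
      have hRe : ∀ x y, b (S x) (S y) = -(lam * b x y) := by
        intro x y
        have h := H x y
        rw [hbl, hbl] at h
        have := congrArg Complex.re h
        simpa [Complex.ext_iff] using this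
      have hIm : ∀ x y, b (S x) (J (S y)) = lam * b x (J y) := by
        intro x y
        have h := H x y
        rw [hbl, hbl] at h
        have := congrArg Complex.im h
        simp [Complex.ext_iff] at this
        linarith
      have hskew : ∀ x y, b (S x) y = - b x (S y) := by
        intro x y
        have h := hRe x (S y)
        rw [hS, hb_smul] at h
        have : lam * b (S x) y = lam * (- b x (S y)) := by linarith
        exact mul_left_cancel₀ hlam0 this
      refine ⟨hskew, ?_⟩
      intro y
      -- show S (J (S y)) = (-lam) • J y by nondegeneracy
      have key : ∀ x, b x (S (J (S y)) + lam • J y) = 0 := by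
        intro x
        rw [hb_add, hb_smul]
        have h1 : b x (S (J (S y))) = - b (S x) (J (S y)) := by
          rw [hskew x (J (S y)), neg_neg]
        rw [h1, hIm]
        ring
      have hz : S (J (S y)) = -(lam • J y) := by
        exact eq_neg_of_add_eq_zero_left (hnd _ key)
      have happ : lam • J (S y) = -(lam • S (J y)) := by
        have h1 := hS (J (S y))
        have h2 := congrArg S hz
        rw [h1, map_neg, map_smul] at h2
        exact h2
      have : lam • (J (S y) + S (J y)) = 0 := by
        rw [smul_add, happ]
        abel
      have h0 : J (S y) + S (J y) = 0 := by
        rcases smul_eq_zero.mp this with h | h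
        · exact absurd h hlam0
        · exact h
      exact eq_neg_of_add_eq_zero_right h0
  · intro hskew hanti hlam1
    -- J as a linear map
    set Jlin : (V × Module.Dual ℝ V) →ₗ[ℝ] (V × Module.Dual ℝ V) :=
      j.prodMap (ℓ • j.dualMap) with hJlin
    have hJapp : ∀ x, J x = Jlin x := by
      intro x
      rw [hJ, hJlin]
      rfl
    have hJJlin : ∀ x, Jlin (Jlin x) = -x := by
      intro x
      rw [← hJapp, ← hJapp, hJJ]
    have hmem1 : ∀ x : V × Module.Dual ℝ V, x ∈ S.eigenspace 1 ↔ S x = x := by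
      intro x
      rw [Module.End.mem_eigenspace_iff, one_smul]
    have hmem2 : ∀ x : V × Module.Dual ℝ V, x ∈ S.eigenspace (-1) ↔ S x = -x := by
      intro x
      rw [Module.End.mem_eigenspace_iff]
      simp
    have hf : ∀ x : V × Module.Dual ℝ V, x ∈ S.eigenspace 1 →
        Jlin x ∈ S.eigenspace (-1) := by
      intro x hx
      rw [hmem1] at hx
      rw [hmem2, ← hJapp, hanti, hx]
    have hg : ∀ x : V × Module.Dual ℝ V, x ∈ S.eigenspace (-1) →
        -(Jlin x) ∈ S.eigenspace 1 := by
      intro x hx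
      rw [hmem2] at hx
      rw [hmem1, map_neg, ← hJapp, hanti, neg_neg, hx]
      simp only [hJapp, map_neg]
    let f : S.eigenspace 1 →ₗ[ℝ] S.eigenspace (-1) :=
      (Jlin ∘ₗ (S.eigenspace 1).subtype).codRestrict _
        (fun x => hf x x.2)
    let g : S.eigenspace (-1) →ₗ[ℝ] S.eigenspace 1 :=
      ((-Jlin) ∘ₗ (S.eigenspace (-1)).subtype).codRestrict _
        (fun x => hg x x.2)
    have hfg : f.comp g = LinearMap.id := by
      refine LinearMap.ext fun x => Subtype.ext ?_
      simp only [f, g, LinearMap.comp_apply, LinearMap.codRestrict_apply,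
        LinearMap.coe_comp, Function.comp_apply, Submodule.coe_subtype,
        LinearMap.neg_apply, map_neg, hJJlin, neg_neg, LinearMap.id_apply]
      change Jlin (-(Jlin (x : V × Module.Dual ℝ V))) = (x : V × Module.Dual ℝ V)
      rw [map_neg, hJJlin, neg_neg]
    have hgf : g.comp f = LinearMap.id := by
      refine LinearMap.ext fun x => Subtype.ext ?_
      simp only [f, g, LinearMap.comp_apply, LinearMap.codRestrict_apply,
        LinearMap.coe_comp, Function.comp_apply, Submodule.coe_subtype,
        LinearMap.neg_apply, map_neg, hJJlin, neg_neg, LinearMap.id_apply]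
      change -(Jlin (Jlin (x : V × Module.Dual ℝ V))) = (x : V × Module.Dual ℝ V)
      rw [hJJlin, neg_neg]
    exact LinearEquiv.finrank_eq (LinearEquiv.ofLinear f g hfg hgf)
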